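/- For all real x and all n ≥ 1/2, the logarithmic derivative of the parabolic cylinder function satisfies -sqrt(x²/4 + n + 1/2) < U'(n,x)/U(n,x) < -sqrt(x²/4 + n - 1/2); the left inequality in fact holds for all n > -1/2. -/

import Mathlib

open Filter

section PCFhelpers
open Real Set
lemma eventually_right_lt_of_deriv_neg {f : ℝ → ℝ} {d x : ℝ}
    (hf : HasDerivAt f d x) (hd : d < 0) :
    ∀ᶠ y in nhdsWithin x (Set.Ioi x), f y < f x := by
  have hs : Tendsto (slope f x) (nhdsWithin x (Set.Ioi x)) (nhds d) :=
    (hasDerivAt_iff_tendsto_slope.1 hf).mono_left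
      (nhdsWithin_mono x (fun y hy => ne_of_gt hy))
  have h1 : ∀ᶠ y in nhdsWithin x (Set.Ioi x), slope f x y < 0 :=
    hs.eventually_lt_const hd
  filter_upwards [h1, self_mem_nhdsWithin] with y hy hy2
  rw [slope_def_field] at hy
  have hxy : (0:ℝ) < y - x := sub_pos.2 hy2
  rcases (div_neg_iff).1 hy with ⟨h1, h2⟩ | ⟨h1, h2⟩
  · linarith
  · linarith

lemma forward_invariant_of_neg {f f' : ℝ → ℝ} {x0 : ℝ}
    (hf : ∀ x, HasDerivAt f (f' x) x)
    (h0 : f x0 < 0)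
    (hcross : ∀ x, x0 ≤ x → f x = 0 → f' x < 0) :
    ∀ x, x0 ≤ x → f x < 0 := by
  intro x2 hx2
  by_contra hge
  push_neg at hge
  have hcont : Continuous f := Differentiable.continuous (fun x => (hf x).differentiableAt)
  have hlt : x0 < x2 := by
    rcases lt_or_eq_of_le hx2 with h | h
    · exact h
    · exfalso; rw [← h] at hge; linarith
  -- set of zeros in [x0, x2]
  set S : Set ℝ := {x | x ∈ Set.Icc x0 x2 ∧ f x = 0} with hS
  have hSne : S.Nonempty := by
    have : (0:ℝ) ∈ Set.Icc (f x0) (f x2) := ⟨le_of_lt h0, hge⟩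
    obtain ⟨z, hz1, hz2⟩ := intermediate_value_Icc (le_of_lt hlt) hcont.continuousOn this
    exact ⟨z, hz1, hz2⟩
  have hSclosed : IsClosed S := by
    have : S = Set.Icc x0 x2 ∩ f ⁻¹' {0} := by
      ext y; simp only [hS, Set.mem_setOf_eq, Set.mem_inter_iff, Set.mem_preimage,
        Set.mem_singleton_iff]
    rw [this]
    exact isClosed_Icc.inter (isClosed_singleton.preimage hcont)
  have hSbdd : BddBelow S := ⟨x0, fun y hy => hy.1.1⟩
  set z := sInf S with hz
  have hzS : z ∈ S := hSclosed.csInf_mem hSne hSbdd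
  have hzIcc : z ∈ Set.Icc x0 x2 := hzS.1
  have hfz : f z = 0 := hzS.2
  have hx0z : x0 < z := by
    rcases lt_or_eq_of_le hzIcc.1 with h | h
    · exact h
    · exfalso; rw [← h] at hfz; linarith
  have hneg : ∀ y, x0 ≤ y → y < z → f y < 0 := by
    intro y hy1 hy2
    by_contra hge2
    push_neg at hge2
    rcases lt_or_eq_of_le hge2 with h | h
    · obtain ⟨v, hv1, hv2⟩ := intermediate_value_Icc hy1 hcont.continuousOn
        (⟨le_of_lt h0, le_of_lt h⟩ : (0:ℝ) ∈ Set.Icc (f x0) (f y))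
      have : z ≤ v := csInf_le hSbdd ⟨⟨hv1.1, le_trans hv1.2 (le_trans (le_of_lt hy2) hzIcc.2)⟩, hv2⟩
      linarith [hv1.2]
    · have : z ≤ y := csInf_le hSbdd ⟨⟨hy1, le_trans (le_of_lt hy2) hzIcc.2⟩, h.symm⟩
      linarith
  -- derivative at z is ≥ 0 via slopes from the left
  have hslope : Tendsto (slope f z) (nhdsWithin z (Set.Iio z)) (nhds (f' z)) :=
    (hasDerivAt_iff_tendsto_slope.1 (hf z)).mono_left
      (nhdsWithin_mono z (fun y hy => ne_of_lt hy))
  have hev : ∀ᶠ y in nhdsWithin z (Set.Iio z), 0 ≤ slope f z y := by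
    have hIoi : Set.Ioi x0 ∈ nhdsWithin z (Set.Iio z) :=
      mem_nhdsWithin_of_mem_nhds (Ioi_mem_nhds hx0z)
    filter_upwards [hIoi, self_mem_nhdsWithin] with y hy1 hy2
    rw [slope_def_field, hfz]
    have h1 : f y < 0 := hneg y (le_of_lt hy1) hy2
    have h2 : y - z < 0 := sub_neg.2 hy2
    exact le_of_lt (div_pos_of_neg_of_neg (by linarith) h2)
  have : (0:ℝ) ≤ f' z := ge_of_tendsto hslope hev
  have := hcross z hzIcc.1 hfz
  linarith

lemma forward_invariant {f f' : ℝ → ℝ} {x0 : ℝ}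
    (hf : ∀ x, HasDerivAt f (f' x) x)
    (h0 : f x0 ≤ 0)
    (hcross : ∀ x, x0 ≤ x → f x = 0 → f' x < 0) :
    ∀ x, x0 < x → f x < 0 := by
  intro x2 hx2
  rcases lt_or_eq_of_le h0 with h | h
  · exact forward_invariant_of_neg hf h hcross x2 (le_of_lt hx2)
  · have hd : f' x0 < 0 := hcross x0 le_rfl h
    have hev := eventually_right_lt_of_deriv_neg (hf x0) hd
    have hev2 : Set.Iio x2 ∈ nhdsWithin x0 (Set.Ioi x0) :=
      mem_nhdsWithin_of_mem_nhds (Iio_mem_nhds hx2)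
    have hev2' : ∀ᶠ y in nhdsWithin x0 (Set.Ioi x0), y ∈ Set.Iio x2 := hev2
    obtain ⟨y, hy1, hy2, hy3⟩ := (hev.and (hev2'.and self_mem_nhdsWithin)).exists
    have hy0 : f y < 0 := by rw [h] at hy1; exact hy1
    exact forward_invariant_of_neg hf hy0
      (fun t ht => hcross t (le_trans (le_of_lt hy3) ht)) x2 (le_of_lt hy2)
section helpers
lemma monoOn_Ici {f f' : ℝ → ℝ} {a : ℝ} (hf : ∀ x, a ≤ x → HasDerivAt f (f' x) x)
    (h : ∀ x, a < x → 0 ≤ f' x) : MonotoneOn f (Set.Ici a) := by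
  apply monotoneOn_of_deriv_nonneg (convex_Ici a)
  · exact fun x hx => ((hf x hx).continuousAt.continuousWithinAt)
  · intro x hx
    rw [interior_Ici] at hx
    exact ((hf x (le_of_lt hx)).differentiableAt.differentiableWithinAt)
  · intro x hx
    rw [interior_Ici] at hx
    rw [(hf x (le_of_lt hx)).deriv]
    exact h x hx

lemma hasDerivAt_exp_sq (b t : ℝ) : HasDerivAt (fun s : ℝ => Real.exp (s^2/b)) (2*t/b * Real.exp (t^2/b)) t := by
  have h2 : HasDerivAt (fun s : ℝ => s^2/b) (2*t/b) t := by
    simpa using ((hasDerivAt_pow 2 t).div_const b)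
  simpa [mul_comm] using h2.exp
end helpers

end PCFhelpers

/-- The parabolic cylinder function `U(a,x)` (DLMF §12), characterized as a
family `U` (with `x`-derivative `U'`) of solutions of `y'' = (x²/4 + a) y`
that is recessive as `x → +∞`, positive for `a > -1/2`, and satisfies the
recurrence `U(a-1,x) = x U(a,x) + (a + 1/2) U(a+1,x)`. -/
structure IsParabolicCylinderU (U U' : ℝ → ℝ → ℝ) : Prop where
  hasDeriv : ∀ a x : ℝ, HasDerivAt (U a) (U' a x) x
  ode : ∀ a x : ℝ, HasDerivAt (U' a) ((x ^ 2 / 4 + a) * U a x) x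
  recessive : ∀ a : ℝ, Tendsto (U a) atTop (nhds 0)
  pos : ∀ a x : ℝ, -1/2 < a → 0 < U a x
  recurrence : ∀ a x : ℝ, U (a - 1) x = x * U a x + (a + 1/2) * U (a + 1) x

namespace PCF
open Real Set
variable {U U' : ℝ → ℝ → ℝ}

/-- Key fact: `U' + (x/2) U < 0` for `a > -1/2`. -/
lemma keyF3 (hU : IsParabolicCylinderU U U') {n : ℝ} (hn : -1/2 < n) (x0 : ℝ) : U' n x0 + x0/2 * U n x0 < 0 := by
  by_contra hge
  push_neg at hge
  set c := n + 1/2 with hc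
  have hcpos : 0 < c := by rw [hc]; linarith
  set φ : ℝ → ℝ := fun t => U n t * Real.exp (t^2/4) with hφdef
  set φd : ℝ → ℝ := fun t => (U' n t + t/2 * U n t) * Real.exp (t^2/4) with hφddef
  have hφpos : ∀ t, 0 < φ t := fun t => mul_pos (hU.pos n t hn) (Real.exp_pos _)
  have hφ : ∀ t, HasDerivAt φ (φd t) t := by
    intro t
    have h1 := hasDerivAt_exp_sq 4 t
    have := (hU.hasDeriv n t).mul h1
    refine this.congr_deriv ?_
    ring
  have hA : ∀ t, HasDerivAt (fun s => U' n s + s/2 * U n s)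
      ((t^2/4 + n) * U n t + (1/2 * U n t + t/2 * U' n t)) t := by
    intro t
    exact (hU.ode n t).add ((((hasDerivAt_id t).div_const 2)).mul (hU.hasDeriv n t))
  have hφd : ∀ t, HasDerivAt φd (t * φd t + c * φ t) t := by
    intro t
    have := (hA t).mul (hasDerivAt_exp_sq 4 t)
    refine this.congr_deriv ?_
    simp only [hφddef, hφdef, hc]
    ring
  -- find a point where φd > 0
  have h0 : 0 ≤ φd x0 := mul_nonneg hge (Real.exp_pos _).le
  obtain ⟨y0, hy0⟩ : ∃ y0, 0 < φd y0 := by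
    rcases eq_or_lt_of_le h0 with h | h
    · have hder : HasDerivAt (fun t => -φd t) (-(x0 * φd x0 + c * φ x0)) x0 := (hφd x0).neg
      have hneg : -(x0 * φd x0 + c * φ x0) < 0 := by
        rw [← h]
        nlinarith [mul_pos hcpos (hφpos x0)]
      obtain ⟨y, hy1, _⟩ := ((eventually_right_lt_of_deriv_neg hder hneg).and
        self_mem_nhdsWithin).exists
      refine ⟨y, ?_⟩
      simp only [← h, neg_zero] at hy1
      linarith
    · exact ⟨x0, h⟩
  -- φd stays positive
  have hcross : ∀ s, y0 ≤ s → -φd s = 0 → -(s * φd s + c * φ s) < 0 := by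
    intro s _ hz
    have hzz : φd s = 0 := by linarith
    rw [hzz]
    nlinarith [mul_pos hcpos (hφpos s)]
  have hpos : ∀ t, y0 ≤ t → 0 < φd t := by
    intro t ht
    have := forward_invariant_of_neg (f := fun s => -φd s)
      (f' := fun s => -(s * φd s + c * φ s))
      (fun s => (hφd s).neg) (by simpa using hy0) hcross t ht
    simp only [neg_neg, neg_lt_zero] at this
    linarith
  set x1 : ℝ := max y0 0 + 1 with hx1def
  have hx1y : y0 ≤ x1 := by
    have := le_max_left y0 0
    rw [hx1def]; linarith
  have hx1pos : 0 < x1 := by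
    have := le_max_right y0 0
    rw [hx1def]; linarith
  set D : ℝ := φd x1 * Real.exp (-(x1^2/2)) with hDdef
  have hDpos : 0 < D := mul_pos (hpos x1 hx1y) (Real.exp_pos _)
  set M : ℝ → ℝ := fun t => φd t * Real.exp (-(t^2/2)) with hMdef
  have hexpneg : ∀ t : ℝ, HasDerivAt (fun s : ℝ => Real.exp (-(s^2/2)))
      (-t * Real.exp (-(t^2/2))) t := by
    intro t
    have h2 : HasDerivAt (fun s : ℝ => -(s^2/2)) (-t) t := by
      have := ((hasDerivAt_pow 2 t).div_const 2).neg
      exact this.congr_deriv (by norm_num)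
    simpa [mul_comm] using h2.exp
  have hMd : ∀ t, HasDerivAt M (c * φ t * Real.exp (-(t^2/2))) t := by
    intro t
    have := (hφd t).mul (hexpneg t)
    refine this.congr_deriv ?_
    ring
  have hMmono : MonotoneOn M (Set.Ici x1) :=
    monoOn_Ici (fun x _ => hMd x)
      (fun x _ => le_of_lt (mul_pos (mul_pos hcpos (hφpos x)) (Real.exp_pos _)))
  have hφdlb : ∀ x, x1 ≤ x → D * Real.exp (x^2/2) ≤ φd x := by
    intro x hx
    have h1 : D ≤ M x := hMmono (Set.mem_Ici.2 le_rfl) (Set.mem_Ici.2 hx) hx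
    have h2 : M x * Real.exp (x^2/2) = φd x := by
      rw [hMdef]
      simp only
      rw [mul_assoc, ← Real.exp_add]
      norm_num
    calc D * Real.exp (x^2/2) ≤ M x * Real.exp (x^2/2) :=
          mul_le_mul_of_nonneg_right h1 (Real.exp_pos _).le
      _ = φd x := h2
  set x3 : ℝ := max x1 (8/D + 8) with hx3def
  set ρ : ℝ → ℝ := fun t => φ t - 2*Real.exp (t^2/4) - t with hρdef
  have hρd : ∀ t, HasDerivAt ρ (φd t - t * Real.exp (t^2/4) - 1) t := by
    intro t
    have := ((hφ t).sub ((hasDerivAt_exp_sq 4 t).const_mul 2)).sub (hasDerivAt_id t)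
    refine this.congr_deriv ?_
    ring
  have hρmono : MonotoneOn ρ (Set.Ici x3) := by
    apply monoOn_Ici (fun x _ => hρd x)
    intro x hx
    have hx1x : x1 ≤ x := le_trans (le_max_left _ _) (le_of_lt hx)
    have hDx : 8/D + 8 ≤ x := le_trans (le_max_right _ _) (le_of_lt hx)
    have hb := hφdlb x hx1x
    have e1 : Real.exp (x^2/2) = Real.exp (x^2/4) * Real.exp (x^2/4) := by
      rw [← Real.exp_add]; ring_nf
    have e2 : x^2/4 + 1 ≤ Real.exp (x^2/4) := Real.add_one_le_exp _
    have e3 : (1:ℝ) ≤ Real.exp (x^2/4) := Real.one_le_exp (by positivity)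
    have h8x : (8:ℝ) ≤ x := by
      have : 0 ≤ 8/D := by positivity
      linarith
    have hD8 : 8 ≤ x * D := by
      rw [← div_le_iff₀ hDpos]
      linarith
    have key1 : x + 1 ≤ D * Real.exp (x^2/4) := by
      have k1 : D * (x^2/4 + 1) ≤ D * Real.exp (x^2/4) :=
        mul_le_mul_of_nonneg_left e2 hDpos.le
      nlinarith [mul_le_mul_of_nonneg_left hD8 (show (0:ℝ) ≤ x/4 by linarith)]
    have key2 : (x + 1) * Real.exp (x^2/4) ≤ D * Real.exp (x^2/2) := by
      rw [e1, ← mul_assoc]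
      exact mul_le_mul_of_nonneg_right key1 (Real.exp_pos _).le
    nlinarith [Real.exp_pos (x^2/4)]
  set x4 : ℝ := max x3 (-(ρ x3)) with hx4def
  have hU2 : ∀ x, x4 ≤ x → 2 ≤ U n x := by
    intro x hx
    have hx3x : x3 ≤ x := le_trans (le_max_left _ _) hx
    have hρx : ρ x3 ≤ ρ x := hρmono (Set.mem_Ici.2 le_rfl) (Set.mem_Ici.2 hx3x) hx3x
    have hxρ : -(ρ x3) ≤ x := le_trans (le_max_right _ _) hx
    have hφ2 : 2 * Real.exp (x^2/4) ≤ φ x := by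
      have hρx3 : ρ x3 = φ x3 - 2*Real.exp (x3^2/4) - x3 := rfl
      have hρx' : ρ x = φ x - 2*Real.exp (x^2/4) - x := rfl
      rw [hρx3] at hxρ
      rw [hρx3, hρx'] at hρx
      linarith
    have : 2 * Real.exp (x^2/4) ≤ U n x * Real.exp (x^2/4) := hφ2
    exact le_of_mul_le_mul_right this (Real.exp_pos _)
  have hev : ∀ᶠ t in atTop, U n t < 1 :=
    (hU.recessive n).eventually_lt_const one_pos
  obtain ⟨t, ht1, ht2⟩ := (hev.and (eventually_ge_atTop x4)).exists
  have := hU2 t ht2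
  linarith

/-- `U'/U < -x/2` for `n > -1/2`. -/
lemma w_lt_neg_half (hU : IsParabolicCylinderU U U') {n : ℝ} (hn : -1/2 < n) (x : ℝ) :
    U' n x / U n x < -(x/2) := by
  have h := keyF3 hU hn x
  have hUpos := hU.pos n x hn
  rw [div_lt_iff₀ hUpos]
  linarith

/-- Riccati equation for `w = U'/U`. -/
lemma w_deriv (hU : IsParabolicCylinderU U U') {n : ℝ} (hn : -1/2 < n) (x : ℝ) :
    HasDerivAt (fun t => U' n t / U n t) (x^2/4 + n - (U' n x / U n x)^2) x := by
  have hUpos := hU.pos n x hn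
  have h := (hU.ode n x).div (hU.hasDeriv n x) (ne_of_gt hUpos)
  refine h.congr_deriv ?_
  have hne := ne_of_gt hUpos
  field_simp

/-- The lower bound. -/
lemma lower_bound (hU : IsParabolicCylinderU U U') {n : ℝ} (hn : -1/2 < n) (x0 : ℝ) :
    -Real.sqrt (x0^2/4 + (n + 1/2)) < U' n x0 / U n x0 := by
  by_contra hge
  push_neg at hge
  set c := n + 1/2 with hc
  have hcpos : 0 < c := by rw [hc]; linarith
  set w : ℝ → ℝ := fun t => U' n t / U n t with hwdef
  set g : ℝ → ℝ := fun t => Real.sqrt (t^2/4 + c) with hgdef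
  have hsarg : ∀ t : ℝ, 0 < t^2/4 + c := fun t => by positivity
  have hgpos : ∀ t, 0 < g t := fun t => Real.sqrt_pos.2 (hsarg t)
  have hg2 : ∀ t, (g t)^2 = t^2/4 + c := fun t => Real.sq_sqrt (hsarg t).le
  set gd : ℝ → ℝ := fun t => t / (4 * g t) with hgddef
  have hg : ∀ t, HasDerivAt g (gd t) t := by
    intro t
    have h1 : HasDerivAt (fun s : ℝ => s^2/4 + c) (t/2) t := by
      have := ((hasDerivAt_pow 2 t).div_const 4).add_const c
      refine this.congr_deriv ?_
      push_cast
      ring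
    have h2 := (Real.hasDerivAt_sqrt (ne_of_gt (hsarg t))).comp t h1
    refine h2.congr_deriv ?_
    rw [hgddef]
    simp only
    rw [hgdef]
    simp only
    field_simp
    ring
  have hglt : ∀ t : ℝ, |t| < 2 * g t := by
    intro t
    nlinarith [hg2 t, hgpos t, abs_nonneg t, sq_abs t]
  have hgdlt : ∀ t, gd t < 1/2 := by
    intro t
    rw [hgddef]
    simp only
    rw [div_lt_iff₀ (by positivity : (0:ℝ) < 4 * g t)]
    calc t ≤ |t| := le_abs_self t
      _ < 2 * g t := hglt t
      _ ≤ 1/2 * (4 * g t) := by linarith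
  set h : ℝ → ℝ := fun t => w t + g t with hhdef
  set hd : ℝ → ℝ := fun t => t^2/4 + n - (w t)^2 + gd t with hhddef
  have hdh : ∀ t, HasDerivAt h (hd t) t := fun t => (w_deriv hU hn t).add (hg t)
  have hcross : ∀ t, x0 ≤ t → h t = 0 → hd t < 0 := by
    intro t _ ht
    have hw : w t = -g t := by
      have : w t + g t = 0 := ht
      linarith
    rw [hhddef]
    simp only
    rw [hw]
    have := hg2 t
    have := hgdlt t
    nlinarith
  have h0 : h x0 ≤ 0 := by
    have : w x0 ≤ -g x0 := hge
    simp only [hhdef]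
    linarith
  have hneg : ∀ t, x0 < t → h t < 0 := forward_invariant hdh h0 hcross
  set x1 : ℝ := x0 + 1 with hx1def
  have hx1 : h x1 < 0 := hneg x1 (by rw [hx1def]; linarith)
  set u : ℝ → ℝ := fun t => -(h t)⁻¹ with hudef
  have hupos : ∀ t, x1 ≤ t → 0 < u t := by
    intro t ht
    have := hneg t (by rw [hx1def] at ht; linarith)
    rw [hudef]
    simp only
    rw [neg_pos]
    exact inv_neg''.2 this
  have hu : ∀ t, x1 ≤ t → HasDerivAt u (hd t / (h t)^2) t := by
    intro t ht
    have hne : h t ≠ 0 := ne_of_lt (hneg t (by rw [hx1def] at ht; linarith))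
    have := ((hdh t).inv hne).neg
    refine this.congr_deriv ?_
    field_simp
  have hderle : ∀ t, x1 ≤ t → hd t / (h t)^2 ≤ -1 := by
    intro t ht
    have hht : h t < 0 := hneg t (by rw [hx1def] at ht; linarith)
    have hsq : 0 < (h t)^2 := by nlinarith
    rw [div_le_iff₀ hsq]
    -- hd t ≤ -(h t)^2
    have hwh : w t = h t - g t := by
      simp only [hhdef]
      ring
    have e1 : hd t + (h t)^2 = gd t - 1/2 + 2 * (h t * g t) := by
      rw [hhddef]
      simp only
      rw [hwh]
      nlinarith [hg2 t]
    have h2 : h t * g t < 0 := mul_neg_of_neg_of_pos hht (hgpos t)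
    have h3 := hgdlt t
    clear_value w g gd h hd u
    nlinarith [e1, h2, h3]
  -- monotone comparison
  have hmono : MonotoneOn (fun t => -u t - t) (Set.Ici x1) := by
    apply monoOn_Ici (f' := fun t => -(hd t / (h t)^2) - 1)
    · intro t ht
      exact ((hu t ht).neg).sub (hasDerivAt_id t)
    · intro t ht
      have := hderle t (le_of_lt ht)
      linarith
  set x2 : ℝ := x1 + u x1 + 1 with hx2def
  have hx12 : x1 ≤ x2 := by
    have := hupos x1 le_rfl
    rw [hx2def]; linarith
  have := hmono (Set.mem_Ici.2 le_rfl) (Set.mem_Ici.2 hx12) hx12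
  simp only at this
  have h1 := hupos x2 hx12
  rw [hx2def] at this
  linarith

/-- The upper bound for `n > 1/2`. -/
lemma upper_bound_gt (hU : IsParabolicCylinderU U U') {n : ℝ} (hn : 1/2 < n) (x0 : ℝ) :
    U' n x0 / U n x0 < -Real.sqrt (x0^2/4 + (n - 1/2)) := by
  by_contra hge
  push_neg at hge
  have hn' : -1/2 < n := by linarith
  set c := n - 1/2 with hc
  have hcpos : 0 < c := by rw [hc]; linarith
  set w : ℝ → ℝ := fun t => U' n t / U n t with hwdef
  set G : ℝ → ℝ := fun t => Real.sqrt (t^2/4 + c) with hGdef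
  have hsarg : ∀ t : ℝ, 0 < t^2/4 + c := fun t => by positivity
  have hGpos : ∀ t, 0 < G t := fun t => Real.sqrt_pos.2 (hsarg t)
  have hG2 : ∀ t, (G t)^2 = t^2/4 + c := fun t => Real.sq_sqrt (hsarg t).le
  set Gd : ℝ → ℝ := fun t => t / (4 * G t) with hGddef
  have hG : ∀ t, HasDerivAt G (Gd t) t := by
    intro t
    have h1 : HasDerivAt (fun s : ℝ => s^2/4 + c) (t/2) t := by
      have := ((hasDerivAt_pow 2 t).div_const 4).add_const c
      refine this.congr_deriv ?_
      push_cast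
      ring
    have h2 := (Real.hasDerivAt_sqrt (ne_of_gt (hsarg t))).comp t h1
    refine h2.congr_deriv ?_
    rw [hGddef]
    simp only
    rw [hGdef]
    simp only
    field_simp
    ring
  have hGlt : ∀ t : ℝ, |t| < 2 * G t := by
    intro t
    nlinarith [hG2 t, hGpos t, abs_nonneg t, sq_abs t]
  have hGdgt : ∀ t, -(1/2) < Gd t := by
    intro t
    rw [hGddef]
    simp only
    rw [lt_div_iff₀ (by positivity : (0:ℝ) < 4 * G t)]
    have h1 : -|t| ≤ t := neg_abs_le t
    have := hGlt t
    nlinarith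
  set k : ℝ → ℝ := fun t => w t + G t with hkdef
  set kd : ℝ → ℝ := fun t => t^2/4 + n - (w t)^2 + Gd t with hkddef
  have hdk : ∀ t, HasDerivAt k (kd t) t := fun t => (w_deriv hU hn' t).add (hG t)
  have hcross : ∀ t, x0 ≤ t → -k t = 0 → -kd t < 0 := by
    intro t _ ht
    have hw : w t = -G t := by
      have h1 : k t = 0 := by linarith
      have h2 : w t + G t = 0 := h1
      linarith
    rw [hkddef]
    simp only
    rw [hw]
    have := hG2 t
    have := hGdgt t
    clear_value w G Gd k kd
    nlinarith
  have h0 : -k x0 ≤ 0 := by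
    have : -G x0 ≤ w x0 := hge
    simp only [hkdef]
    linarith
  have hkpos : ∀ t, x0 < t → 0 < k t := by
    intro t ht
    have := forward_invariant (f := fun s => -k s) (f' := fun s => -kd s)
      (fun s => (hdk s).neg) h0 hcross t ht
    linarith
  set x1 : ℝ := max x0 0 + 1 with hx1def
  have hx01 : x0 < x1 := by
    have := le_max_left x0 0
    rw [hx1def]; linarith
  have hx1pos : 1 ≤ x1 := by
    have := le_max_right x0 0
    rw [hx1def]; linarith
  have hmono : MonotoneOn (fun t => k t - t/2) (Set.Ici x1) := by
    apply monoOn_Ici (f' := fun t => kd t - 1/2)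
    · intro t _
      exact (hdk t).sub ((hasDerivAt_id t).div_const 2)
    · intro t ht
      have htpos : 0 < t := by linarith
      have hwneg : w t < 0 := by
        have := w_lt_neg_half hU hn' t
        have h2 : -(t/2) ≤ 0 := by linarith
        exact lt_of_lt_of_le this h2
      have hwG : -G t < w t := by
        have := hkpos t (by linarith)
        simp only [hkdef] at this
        linarith
      have hw2 : (w t)^2 < (G t)^2 := by nlinarith
      have hGd0 : 0 ≤ Gd t := by
        rw [hGddef]
        simp only
        positivity
      have := hG2 t
      clear_value w G Gd k kd
      simp only [hkddef]
      nlinarith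
  set x2 : ℝ := x1 + 2*c + 1 with hx2def
  have hx12 : x1 ≤ x2 := by rw [hx2def]; linarith
  have hmm := hmono (Set.mem_Ici.2 le_rfl) (Set.mem_Ici.2 hx12) hx12
  simp only at hmm
  have hk1 : 0 < k x1 := hkpos x1 hx01
  have hGle : G x2 ≤ x2/2 + c := by
    have hx2pos : (1:ℝ) ≤ x2 := by rw [hx2def]; linarith
    have h1 : x2^2/4 + c ≤ (x2/2 + c)^2 := by nlinarith
    have h2 : (0:ℝ) ≤ x2/2 + c := by linarith
    calc G x2 = Real.sqrt (x2^2/4 + c) := rfl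
      _ ≤ Real.sqrt ((x2/2 + c)^2) := Real.sqrt_le_sqrt h1
      _ = x2/2 + c := by rw [Real.sqrt_sq h2]
  have hwx2 : w x2 < -(x2/2) := w_lt_neg_half hU hn' x2
  have hkx2 : k x2 = w x2 + G x2 := rfl
  rw [hx2def] at hmm
  clear_value w G Gd k kd
  nlinarith

/-- The upper bound for `n = 1/2`. -/
lemma upper_bound_half (hU : IsParabolicCylinderU U U') (x : ℝ) :
    U' (1/2) x / U (1/2) x < -Real.sqrt (x^2/4) := by
  set n : ℝ := 1/2 with hn
  have hn' : -1/2 < n := by rw [hn]; norm_num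
  have hUpos : ∀ t, 0 < U n t := fun t => hU.pos n t hn'
  -- first bound : w < -x/2
  have h1 : U' n x / U n x < -(x/2) := w_lt_neg_half hU hn' x
  -- second bound : w < x/2
  set ψd : ℝ → ℝ := fun t => (U' n t - t/2 * U n t) * Real.exp (-(t^2/4)) with hψddef
  have hexp4 : ∀ t : ℝ, HasDerivAt (fun s : ℝ => Real.exp (-(s^2/4)))
      (-(t/2) * Real.exp (-(t^2/4))) t := by
    intro t
    have h2 : HasDerivAt (fun s : ℝ => -(s^2/4)) (-(t/2)) t := by
      have := ((hasDerivAt_pow 2 t).div_const 4).neg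
      refine this.congr_deriv ?_
      push_cast
      ring
    simpa [mul_comm] using h2.exp
  have hψd : ∀ t, HasDerivAt ψd (-t * ψd t) t := by
    intro t
    have hA : HasDerivAt (fun s => U' n s - s/2 * U n s)
        ((t^2/4 + n) * U n t - (1/2 * U n t + t/2 * U' n t)) t :=
      (hU.ode n t).sub ((((hasDerivAt_id t).div_const 2)).mul (hU.hasDeriv n t))
    have := hA.mul (hexp4 t)
    refine this.congr_deriv ?_
    rw [hψddef, hn]
    simp only
    ring
  set P : ℝ → ℝ := fun t => ψd t * Real.exp (t^2/2) with hPdef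
  have hP : ∀ t, HasDerivAt P 0 t := by
    intro t
    have := (hψd t).mul (hasDerivAt_exp_sq 2 t)
    refine this.congr_deriv ?_
    ring
  have hconst : ∀ s t : ℝ, P s = P t :=
    is_const_of_deriv_eq_zero (fun t => (hP t).differentiableAt) (fun t => (hP t).deriv)
  have hP1 : P 1 < 0 := by
    have hk := keyF3 hU hn' 1
    have hU1 := hUpos 1
    have hψd1 : ψd 1 < 0 := by
      rw [hψddef]
      simp only
      apply mul_neg_of_neg_of_pos _ (Real.exp_pos _)
      nlinarith
    rw [hPdef]
    simp only
    exact mul_neg_of_neg_of_pos hψd1 (Real.exp_pos _)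
  have hψdx : ψd x < 0 := by
    have := (hconst x 1).symm ▸ hP1
    have hPx : P x < 0 := by rw [hconst x 1]; exact hP1
    rw [hPdef] at hPx
    simp only at hPx
    by_contra hge
    push_neg at hge
    nlinarith [Real.exp_pos (x^2/2)]
  have h2 : U' n x / U n x < x/2 := by
    rw [hψddef] at hψdx
    simp only at hψdx
    have hE := Real.exp_pos (-(x^2/4))
    have hA : U' n x - x/2 * U n x < 0 := by nlinarith
    rw [div_lt_iff₀ (hUpos x)]
    linarith
  have hs : Real.sqrt (x^2/4) = |x|/2 := by
    rw [show x^2/4 = (x/2)^2 by ring, Real.sqrt_sq_eq_abs, abs_div]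
    norm_num
  rw [hs]
  rcases abs_cases x with ⟨he, _⟩ | ⟨he, _⟩
  · rw [he]; exact h1
  · rw [he]; linarith

end PCF

/-- For all real `x` and `n ≥ 1/2`,
`-√(x²/4 + n + 1/2) < U'(n,x)/U(n,x) < -√(x²/4 + n - 1/2)`;
the left inequality holds for all `n > -1/2`. -/
theorem pcf_log_deriv_bounds (U U' : ℝ → ℝ → ℝ)
    (hU : IsParabolicCylinderU U U') :
    (∀ n x : ℝ, 1/2 ≤ n →
      -Real.sqrt (x ^ 2 / 4 + n + 1/2) < U' n x / U n x ∧
      U' n x / U n x < -Real.sqrt (x ^ 2 / 4 + n - 1/2)) ∧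
    (∀ n x : ℝ, -1/2 < n →
      -Real.sqrt (x ^ 2 / 4 + n + 1/2) < U' n x / U n x) := by

  constructor
  · intro n x hn
    have hn' : -1/2 < n := by linarith
    constructor
    · have := PCF.lower_bound hU hn' x
      rw [show x ^ 2 / 4 + n + 1/2 = x ^ 2 / 4 + (n + 1/2) from by ring]
      exact this
    · rcases eq_or_lt_of_le hn with h | h
      · rw [← h]
        rw [show x ^ 2 / 4 + 1/2 - 1/2 = x ^ 2 / 4 from by ring]
        exact PCF.upper_bound_half hU x
      · rw [show x ^ 2 / 4 + n - 1/2 = x ^ 2 / 4 + (n - 1/2) from by ring]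
        exact PCF.upper_bound_gt hU h x
  · intro n x hn
    rw [show x ^ 2 / 4 + n + 1/2 = x ^ 2 / 4 + (n + 1/2) from by ring]
    exact PCF.lower_bound hU hn x
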